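/- Let z be a class of admissible type, with associated derivation ∂_z. Then for every k ∈ ℤ and every f ∈ Λ_{≥k}, one has ∂_z f − k·q^{A_*}·f ∈ Λ_{≥k}, where q^{A_*} ∈ Λ is the delta function at A_* and the product is taken in Λ. In particular (the case k = 0), ∂_z maps Λ^i_{≥0} into Λ^{i+2}_{≥0}. -/
import Mathlib


namespace Nov

/-- The lattice `H = ℤ^{r+2}`. -/
abbrev H (r : ℕ) : Type := Fin (r + 2) → ℤ

/-- The delta function `q^{A₀}` at `A₀ ∈ H`. -/
noncomputable def delta {r : ℕ} (A₀ : H r) : H r → ℚ :=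
  fun A => if A = A₀ then 1 else 0

/-- The unit element `q^0` of the Novikov ring. -/
noncomputable def one (r : ℕ) : H r → ℚ := delta (0 : H r)

/-- The convolution product `(x·y)(A) = ∑_{A₁+A₂=A} x(A₁)·y(A₂)`. -/
noncomputable def mul {r : ℕ} (x y : H r → ℚ) : H r → ℚ :=
  fun A => ∑ᶠ B : H r, x B * y (A - B)

/-- The degree-2 derivation `(∂_z x)(A) = ∑_{A₁+A₂=A} z_{A₁}(A₂)·x(A₂)`
associated to a family `z` of additive maps `H → ℚ`. -/
noncomputable def dz {r : ℕ} (z : H r → (H r →+ ℚ)) (x : H r → ℚ) : H r → ℚ :=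
  fun A => ∑ᶠ B : H r, z (A - B) B * x B

/-- The `ν`-finiteness condition: for every `C`, only finitely many support
elements `A` with `ν(A) ≤ C`. -/
def NuFinite {r : ℕ} (ν : H r →+ ℤ) (x : H r → ℚ) : Prop :=
  ∀ C : ℤ, {A : H r | x A ≠ 0 ∧ ν A ≤ C}.Finite

/-- Membership in the homogeneous piece `Λ^i`: support in `{2μ = i}` plus
`ν`-finiteness. -/
def MemHom {r : ℕ} (μ ν : H r →+ ℤ) (i : ℤ) (x : H r → ℚ) : Prop :=
  (∀ A, x A ≠ 0 → 2 * μ A = i) ∧ NuFinite ν x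

/-- Membership in `Λ = ⊕_i Λ^i`: `ν`-finiteness plus finitely many occurring
degrees. -/
def MemLambda {r : ℕ} (μ ν : H r →+ ℤ) (x : H r → ℚ) : Prop :=
  NuFinite ν x ∧ ({i : ℤ | ∃ A, x A ≠ 0 ∧ 2 * μ A = i}).Finite

/-- Support contained in `{ν ≥ k}` (membership in `Λ_{≥k}`, for elements of
`Λ`). -/
def MemGE {r : ℕ} (ν : H r →+ ℤ) (k : ℤ) (x : H r → ℚ) : Prop :=
  ∀ A, x A ≠ 0 → k ≤ ν A

/-- A class `z` of admissible type: supported on `{μ = 1}`, `ν`-finite, equal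
to `ν` at `A_*`, and vanishing on all `A₁ ≠ A_*` with `ν(A₁) < 0`. -/
structure Admissible {r : ℕ} (μ ν : H r →+ ℤ) (Astar : H r)
    (z : H r → (H r →+ ℚ)) : Prop where
  supp_mu : ∀ A₁, z A₁ ≠ 0 → μ A₁ = 1
  nu_fin : ∀ C : ℤ, {A₁ : H r | z A₁ ≠ 0 ∧ ν A₁ ≤ C}.Finite
  at_star : ∀ A, z Astar A = (ν A : ℚ)
  vanish_neg : ∀ A₁, A₁ ≠ Astar → ν A₁ < 0 → z A₁ = 0

open scoped Classical in
/-- The (two-sided) inverse of `x` within `Λ`, chosen if it exists. -/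
noncomputable def invN {r : ℕ} (μ ν : H r →+ ℤ) (x : H r → ℚ) : H r → ℚ :=
  if h : ∃ y, MemLambda μ ν y ∧ mul x y = one r ∧ mul y x = one r then
    h.choose
  else 0

/-- The Schwarzian
`S_z f = ∂_z(∂_z∂_z f·(∂_z f)⁻¹) − (1/2)·(∂_z∂_z f·(∂_z f)⁻¹)²`. -/
noncomputable def Sz {r : ℕ} (μ ν : H r →+ ℤ) (z : H r → (H r →+ ℚ))
    (f : H r → ℚ) : H r → ℚ :=
  dz z (mul (dz z (dz z f)) (invN μ ν (dz z f)))
    - (1 / 2 : ℚ) •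
        mul (mul (dz z (dz z f)) (invN μ ν (dz z f)))
          (mul (dz z (dz z f)) (invN μ ν (dz z f)))

end Nov


section Aux
variable {r : ℕ} {μ ν : Nov.H r →+ ℤ} {Astar : Nov.H r} {z : Nov.H r → (Nov.H r →+ ℚ)}

open Nov

lemma mul_delta_apply (f : H r → ℚ) (A : H r) :
    mul (delta Astar) f A = f (A - Astar) := by
  unfold mul
  rw [finsum_eq_single _ Astar]
  · simp [delta]
  · intro B hB; simp [delta, hB]

lemma z_ne_zero {A₁ B : H r} (h : z A₁ B ≠ 0) : z A₁ ≠ 0 := by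
  intro h0; apply h; rw [h0]; rfl

lemma exists_term {f : H r → ℚ} {A : H r} (h : dz z f A ≠ 0) :
    ∃ B, z (A - B) B ≠ 0 ∧ f B ≠ 0 := by
  by_contra hc
  push_neg at hc
  apply h
  apply finsum_eq_zero_of_forall_eq_zero
  intro B
  by_cases h1 : z (A - B) B = 0
  · rw [h1, zero_mul]
  · rw [hc B h1, mul_zero]

lemma nu_z_ge (hνA : ν Astar = -1) (hz : Admissible μ ν Astar z)
    {A₁ : H r} (h : z A₁ ≠ 0) : -1 ≤ ν A₁ := by
  by_cases hA : A₁ = Astar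
  · rw [hA, hνA]
  · by_contra hlt
    push_neg at hlt
    exact h (hz.vanish_neg A₁ hA (by omega))

/-- Pointwise evaluation below level `k`: the shifted derivation vanishes. -/
lemma pointwise_zero (hνA : ν Astar = -1) (hz : Admissible μ ν Astar z)
    (k : ℤ) (f : H r → ℚ) (hge : MemGE ν k f) {A : H r} (hA : ν A < k) :
    dz z f A - (k : ℚ) * mul (delta Astar) f A = 0 := by
  have hdz : dz z f A = ((ν A : ℚ) + 1) * f (A - Astar) := by
    unfold dz
    rw [finsum_eq_single _ (A - Astar)]
    · rw [sub_sub_cancel, hz.at_star, map_sub, hνA]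
      push_cast
      ring
    · intro B hB
      by_contra hterm
      have hzB : z (A - B) ≠ 0 := z_ne_zero (fun h0 => hterm (by rw [h0, zero_mul]))
      have hfB : f B ≠ 0 := fun h0 => hterm (by rw [h0, mul_zero])
      have hne : A - B ≠ Astar := by
        intro h0
        apply hB
        have : A - (A - B) = A - Astar := by rw [h0]
        rwa [sub_sub_cancel] at this
      have h1 : (0 : ℤ) ≤ ν (A - B) := by
        by_contra hlt
        push_neg at hlt
        exact hzB (hz.vanish_neg _ hne hlt)
      have h2 : k ≤ ν B := hge B hfB
      rw [map_sub] at h1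
      omega
  rw [hdz, mul_delta_apply]
  by_cases hf0 : f (A - Astar) = 0
  · rw [hf0]; ring
  · have h1 : k ≤ ν (A - Astar) := hge _ hf0
    rw [map_sub, hνA] at h1
    have h2 : ν A = k - 1 := by omega
    rw [h2]
    push_cast
    ring

/-- The key lemma: `∂_z f − k·q^{A_*}·f ∈ Λ_{≥k}`. -/
lemma key_lemma (hμA : μ Astar = 1) (hνA : ν Astar = -1)
    (hz : Admissible μ ν Astar z) (k : ℤ) (f : H r → ℚ)
    (hf : MemLambda μ ν f) (hge : MemGE ν k f) :
    MemLambda μ ν (dz z f - (k : ℚ) • mul (delta Astar) f) ∧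
      MemGE ν k (dz z f - (k : ℚ) • mul (delta Astar) f) := by
  set g := dz z f - (k : ℚ) • mul (delta Astar) f with hg
  have hgA : ∀ A, g A = dz z f A - (k : ℚ) * mul (delta Astar) f A := by
    intro A; simp [hg, smul_eq_mul]
  -- nonvanishing of g gives a witness B
  have hwit : ∀ A, g A ≠ 0 → ∃ B, f B ≠ 0 ∧ μ (A - B) = 1 ∧
      -1 ≤ ν (A - B) ∧ z (A - B) ≠ 0 ∨ f B ≠ 0 ∧ A = B + Astar := by
    intro A hAne
    rw [hgA] at hAne
    by_cases hdz0 : dz z f A = 0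
    · have hδ : f (A - Astar) ≠ 0 := by
        intro h0
        apply hAne
        rw [hdz0, mul_delta_apply, h0]; ring
      exact ⟨A - Astar, Or.inr ⟨hδ, by abel⟩⟩
    · obtain ⟨B, hzB, hfB⟩ := exists_term hdz0
      have hz1 : z (A - B) ≠ 0 := z_ne_zero hzB
      exact ⟨B, Or.inl ⟨hfB, hz.supp_mu _ hz1, nu_z_ge hνA hz hz1, hz1⟩⟩
  refine ⟨⟨?_, ?_⟩, ?_⟩
  · -- NuFinite
    intro C
    have hsub : {A : H r | g A ≠ 0 ∧ ν A ≤ C} ⊆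
        Set.image2 (fun a b => a + b)
          {A₁ : H r | z A₁ ≠ 0 ∧ ν A₁ ≤ C - k}
          {B : H r | f B ≠ 0 ∧ ν B ≤ C + 1} ∪
        ((fun B => B + Astar) '' {B : H r | f B ≠ 0 ∧ ν B ≤ C + 1}) := by
      rintro A ⟨hAne, hAC⟩
      obtain ⟨B, hB | hB⟩ := hwit A hAne
      · left
        obtain ⟨hfB, -, hnu1, hz1⟩ := hB
        have hk : k ≤ ν B := hge B hfB
        rw [map_sub] at hnu1
        refine Set.mem_image2.2 ⟨A - B, ⟨hz1, ?_⟩, B, ⟨hfB, by omega⟩, by abel⟩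
        rw [map_sub]; omega
      · right
        obtain ⟨hfB, hAB⟩ := hB
        refine ⟨B, ⟨hfB, ?_⟩, hAB.symm⟩
        have : ν A = ν B + ν Astar := by rw [hAB, map_add]
        omega
    exact Set.Finite.subset
      (Set.Finite.union
        (Set.Finite.image2 _ (hz.nu_fin (C - k)) (hf.1 (C + 1)))
        (Set.Finite.image _ (hf.1 (C + 1)))) hsub
  · -- finitely many degrees
    have hsub : {i : ℤ | ∃ A, g A ≠ 0 ∧ 2 * μ A = i} ⊆
        (fun j => j + 2) '' {i : ℤ | ∃ A, f A ≠ 0 ∧ 2 * μ A = i} := by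
      rintro i ⟨A, hAne, hdeg⟩
      obtain ⟨B, hB | hB⟩ := hwit A hAne
      · obtain ⟨hfB, hμ1, -, -⟩ := hB
        refine ⟨2 * μ B, ⟨B, hfB, rfl⟩, ?_⟩
        have : μ A = μ (A - B) + μ B := by rw [map_sub]; ring
        show 2 * μ B + 2 = i
        omega
      · obtain ⟨hfB, hAB⟩ := hB
        refine ⟨2 * μ B, ⟨B, hfB, rfl⟩, ?_⟩
        have : μ A = μ B + μ Astar := by rw [hAB, map_add]
        show 2 * μ B + 2 = i
        omega
    exact Set.Finite.subset (Set.Finite.image _ hf.2) hsub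
  · -- MemGE
    intro A hAne
    by_contra hlt
    push_neg at hlt
    exact hAne (by rw [hgA]; exact pointwise_zero hνA hz k f hge hlt)

end Aux

open Nov in
/-- For `f ∈ Λ_{≥k}`, one has `∂_z f − k·q^{A_*}·f ∈ Λ_{≥k}`.  In particular
(`k = 0`), `∂_z` maps `Λ^i_{≥0}` into `Λ^{i+2}_{≥0}`. -/
theorem dz_shift_in_lambda_ge (r : ℕ) (μ ν : H r →+ ℤ) (Astar : H r)
    (hμA : μ Astar = 1) (hνA : ν Astar = -1)
    (z : H r → (H r →+ ℚ)) (hz : Admissible μ ν Astar z)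
    (k : ℤ) (f : H r → ℚ)
    (hf : MemLambda μ ν f) (hge : MemGE ν k f) :
    (MemLambda μ ν (dz z f - (k : ℚ) • mul (delta Astar) f) ∧
      MemGE ν k (dz z f - (k : ℚ) • mul (delta Astar) f)) ∧
    (∀ (i : ℤ) (x : H r → ℚ), MemHom μ ν i x → MemGE ν 0 x →
        MemHom μ ν (i + 2) (dz z x) ∧ MemGE ν 0 (dz z x)) := by
  have key := key_lemma hμA hνA hz k f hf hge
  refine ⟨key, ?_⟩
  intro i x hx hge0
  have hxl : MemLambda μ ν x := ⟨hx.2, Set.Finite.subset (Set.finite_singleton i)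
    (by rintro j ⟨A, hA, hdeg⟩; exact (hx.1 A hA ▸ hdeg.symm : j = i) ▸ rfl)⟩
  have key0 := key_lemma hμA hνA hz 0 x hxl hge0
  have hsimp : dz z x - ((0 : ℤ) : ℚ) • mul (delta Astar) x = dz z x := by
    simp
  rw [hsimp] at key0
  refine ⟨⟨?_, key0.1.1⟩, key0.2⟩
  intro A hA
  obtain ⟨B, hzB, hxB⟩ := exists_term hA
  have hμ1 : μ (A - B) = 1 := hz.supp_mu _ (z_ne_zero hzB)
  have hdegB : 2 * μ B = i := hx.1 B hxB
  have : μ A = μ (A - B) + μ B := by rw [map_sub]; ring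
  omega
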